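/- Let 1 < γ < 2 < ω, and on the interval (0, 1/2) define s(x) = 1/(x·(log(1/x))^γ) and w(x) = 1/(x·(log(1/x))^ω). Then: (i) ∫₀^{1/2} λ_B(w(x)) dx < ∞, (ii) ∫₀^{1/2} w(x)·C(s(x)/w(x)) dx < ∞, but (iii) ∫₀^{1/2} C(s(x)) dx = ∞, where C(s) = 2·s·arsinh(s/2) − 2·√(s² + 4) + 4 and λ_B(r) = r·log r − r + 1. -/

import Mathlib

open MeasureTheory

/-- The Boltzmann function `λ_B(r) = r log r - r + 1`. -/
noncomputable def lamB (r : ℝ) : ℝ := r * Real.log r - r + 1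

/-- The Legendre conjugate of `C*(ζ) = 4 cosh(ζ/2) - 4`. -/
noncomputable def Cfun (s : ℝ) : ℝ :=
  2 * s * Real.arsinh (s / 2) - 2 * Real.sqrt (s ^ 2 + 4) + 4

lemma image_exp_neg (a : ℝ) :
    (fun t : ℝ => Real.exp (-t)) '' Set.Ioi a = Set.Ioo 0 (Real.exp (-a)) := by
  ext x
  constructor
  · rintro ⟨t, ht, rfl⟩
    exact ⟨Real.exp_pos _, Real.exp_lt_exp.2 (by simpa using ht)⟩
  · rintro ⟨hx0, hx1⟩
    refine ⟨-Real.log x, ?_, by simp [Real.exp_log hx0]⟩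
    have := Real.log_lt_log hx0 hx1
    rw [Real.log_exp] at this
    exact Set.mem_Ioi.2 (by linarith)

lemma key_subst (a : ℝ) (g : ℝ → ℝ) :
    IntegrableOn g (Set.Ioo 0 (Real.exp (-a))) ↔
      IntegrableOn (fun t => Real.exp (-t) * g (Real.exp (-t))) (Set.Ioi a) := by
  rw [← image_exp_neg a]
  have hderiv : ∀ t ∈ Set.Ioi a,
      HasDerivWithinAt (fun t : ℝ => Real.exp (-t)) (-Real.exp (-t)) (Set.Ioi a) t := by
    intro t _
    have h := ((Real.hasDerivAt_exp (-t)).comp t (hasDerivAt_neg t))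
    simp only [mul_neg, mul_one] at h
    exact h.hasDerivWithinAt
  have hinj : Set.InjOn (fun t : ℝ => Real.exp (-t)) (Set.Ioi a) :=
    (Real.exp_injective.comp neg_injective).injOn
  rw [integrableOn_image_iff_integrableOn_abs_deriv_smul measurableSet_Ioi hderiv hinj g]
  refine integrableOn_congr_fun (fun t _ => ?_) measurableSet_Ioi
  simp [abs_of_pos (Real.exp_pos (-t)), smul_eq_mul]

lemma lemA' (p : ℝ) (hp : 1 < p) :
    IntegrableOn (fun x => 1 / (x * Real.log (1 / x) ^ p)) (Set.Ioo (0:ℝ) (1 / 2)) := by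
  have h2 : (1 / 2 : ℝ) = Real.exp (-Real.log 2) := by
    rw [Real.exp_neg, Real.exp_log two_pos, one_div]
  rw [h2, key_subst]
  refine (integrableOn_Ioi_rpow_of_lt (by linarith : -p < -1)
    (Real.log_pos one_lt_two)).congr_fun (fun t ht => ?_) measurableSet_Ioi
  have ht0 : 0 < t := lt_trans (Real.log_pos one_lt_two) ht
  have h1 : Real.log (1 / Real.exp (-t)) = t := by
    rw [one_div, Real.exp_neg, inv_inv, Real.log_exp]
  beta_reduce
  rw [Real.rpow_neg ht0.le]
  rw [h1]
  field_simp

lemma ptwise1 (ω : ℝ) (hω : 2 < ω) (x : ℝ) (hx : x ∈ Set.Ioo (0:ℝ) (1/2)) :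
    lamB (1 / (x * Real.log (1 / x) ^ ω)) ≤
      (1 + 3 * ω) * (1 / (x * Real.log (1 / x) ^ (ω - 1))) + 1 := by
  obtain ⟨hx0, hx1⟩ := hx
  set t := Real.log (1 / x) with htdef
  have hlog2 : (0.6931471803 : ℝ) < Real.log 2 := Real.log_two_gt_d9
  have ht2 : Real.log 2 < t := by
    apply Real.log_lt_log two_pos
    rw [lt_div_iff₀ hx0]; linarith
  have ht0 : 0 < t := by linarith
  have htp : 0 < t ^ ω := Real.rpow_pos_of_pos ht0 ω
  set w := 1 / (x * t ^ ω) with hwdef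
  have hw : 0 < w := by positivity
  have hlogx : Real.log x = -t := by
    rw [htdef, one_div, Real.log_inv, neg_neg]
  have hlogw : Real.log w = t - ω * Real.log t := by
    rw [hwdef, one_div, Real.log_inv, Real.log_mul (ne_of_gt hx0) (ne_of_gt htp),
      Real.log_rpow ht0, hlogx]
    ring
  have habs : |Real.log t| ≤ t + 1 := by
    rcases le_or_gt 1 t with h1 | h1
    · rw [abs_of_nonneg (Real.log_nonneg h1)]
      linarith [Real.log_le_sub_one_of_pos ht0]
    · rw [abs_of_neg (Real.log_neg ht0 h1)]
      have h2 : Real.log t⁻¹ ≤ t⁻¹ - 1 := Real.log_le_sub_one_of_pos (by positivity)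
      rw [Real.log_inv] at h2
      have h3 : t⁻¹ ≤ 2 := by
        rw [inv_le_comm₀ ht0 two_pos]; linarith
      linarith
  have hwt : w * t = 1 / (x * t ^ (ω - 1)) := by
    rw [hwdef, Real.rpow_sub ht0, Real.rpow_one]
    field_simp
  have key : lamB w ≤ (1 + 3 * ω) * (w * t) + 1 := by
    rw [lamB, hlogw]
    have h4 : Real.log t ≤ t + 1 := (le_abs_self _).trans habs
    have h5 : -(t + 1) ≤ Real.log t := by linarith [neg_abs_le (Real.log t)]
    have hωw : (0:ℝ) ≤ ω * w := by positivity
    nlinarith [mul_le_mul_of_nonneg_left h5 hωw,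
      mul_le_mul_of_nonneg_left (show (1:ℝ) ≤ 2 * t by linarith) hωw, hw.le,
      mul_pos hw ht0]
  rw [← hwt]
  exact key

lemma Cfun_le (σ : ℝ) (hσ : 0 ≤ σ) : Cfun σ ≤ 2 * σ * Real.log (σ + 1) + 4 := by
  have h1 : Real.arsinh (σ / 2) ≤ Real.log (σ + 1) := by
    rw [Real.arsinh]
    apply Real.log_le_log (by positivity)
    have : Real.sqrt (1 + (σ / 2) ^ 2) ≤ 1 + σ / 2 := by
      rw [show (1 : ℝ) + σ / 2 = Real.sqrt ((1 + σ / 2) ^ 2) by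
        rw [Real.sqrt_sq (by positivity)]]
      apply Real.sqrt_le_sqrt
      nlinarith
    linarith
  have h2 : 0 ≤ Real.sqrt (σ ^ 2 + 4) := Real.sqrt_nonneg _
  have h3 : 2 * σ * Real.arsinh (σ / 2) ≤ 2 * σ * Real.log (σ + 1) :=
    mul_le_mul_of_nonneg_left h1 (by positivity)
  rw [Cfun]; linarith

lemma ptwise2 (γ ω : ℝ) (hγ1 : 1 < γ) (hγ2 : γ < 2) (hω : 2 < ω) (x : ℝ)
    (hx : x ∈ Set.Ioo (0:ℝ) (1/2)) :
    (1 / (x * Real.log (1 / x) ^ ω)) *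
        Cfun ((1 / (x * Real.log (1 / x) ^ γ)) / (1 / (x * Real.log (1 / x) ^ ω))) ≤
      2 * (1 / (x * Real.log (1 / x) ^ γ)) +
        (2 * ω / ((γ - 1) / 2)) * (1 / (x * Real.log (1 / x) ^ ((γ + 1) / 2))) +
        4 * (1 / (x * Real.log (1 / x) ^ ω)) := by
  obtain ⟨hx0, hx1⟩ := hx
  set t := Real.log (1 / x) with htdef
  set ε : ℝ := (γ - 1) / 2 with hεdef
  have hε : 0 < ε := by rw [hεdef]; linarith
  have hlog2 : (0.6931471803 : ℝ) < Real.log 2 := Real.log_two_gt_d9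
  have ht2 : Real.log 2 < t := by
    apply Real.log_lt_log two_pos
    rw [lt_div_iff₀ hx0]; linarith
  have ht0 : 0 < t := by linarith
  have htpω : 0 < t ^ ω := Real.rpow_pos_of_pos ht0 ω
  have htpγ : 0 < t ^ γ := Real.rpow_pos_of_pos ht0 γ
  have htpε : 0 < t ^ ε := Real.rpow_pos_of_pos ht0 ε
  set σ : ℝ := t ^ (ω - γ) with hσdef
  have hσ0 : 0 < σ := Real.rpow_pos_of_pos ht0 _
  have hσeq : (1 / (x * t ^ γ)) / (1 / (x * t ^ ω)) = σ := by
    rw [hσdef, Real.rpow_sub ht0]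
    field_simp
  have hlogσ : Real.log (σ + 1) ≤ 1 + (ω / ε) * t ^ ε := by
    have hlt : Real.log t ≤ t ^ ε / ε := Real.log_le_rpow_div ht0.le hε
    have hlog2le : Real.log 2 ≤ 1 := by
      linarith [Real.log_le_sub_one_of_pos (two_pos : (0:ℝ) < 2)]
    rcases le_or_gt 1 t with h1 | h1
    · have hσ1 : 1 ≤ σ := by
        rw [hσdef]
        calc (1:ℝ) = 1 ^ (ω - γ) := (Real.one_rpow _).symm
        _ ≤ t ^ (ω - γ) := Real.rpow_le_rpow zero_le_one h1 (by linarith)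
      have hlogt0 : 0 ≤ Real.log t := Real.log_nonneg h1
      calc Real.log (σ + 1) ≤ Real.log (2 * σ) := Real.log_le_log (by linarith) (by linarith)
      _ = Real.log 2 + Real.log σ := Real.log_mul two_ne_zero (ne_of_gt hσ0)
      _ = Real.log 2 + (ω - γ) * Real.log t := by rw [hσdef, Real.log_rpow ht0]
      _ ≤ 1 + ω * (t ^ ε / ε) := by
          have : (ω - γ) * Real.log t ≤ ω * Real.log t :=
            mul_le_mul_of_nonneg_right (by linarith) hlogt0
          have h2 : ω * Real.log t ≤ ω * (t ^ ε / ε) :=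
            mul_le_mul_of_nonneg_left hlt (by linarith)
          linarith
      _ = 1 + (ω / ε) * t ^ ε := by ring
    · have hσ1 : σ ≤ 1 := Real.rpow_le_one ht0.le h1.le (by linarith)
      calc Real.log (σ + 1) ≤ Real.log 2 := Real.log_le_log (by linarith) (by linarith)
      _ ≤ 1 := hlog2le
      _ ≤ 1 + (ω / ε) * t ^ ε := by
          have : (0:ℝ) < (ω / ε) * t ^ ε := by positivity
          linarith
  set w : ℝ := 1 / (x * t ^ ω) with hwdef
  have hw : 0 < w := by positivity
  have hwσ : w * σ = 1 / (x * t ^ γ) := by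
    rw [hwdef, hσdef, Real.rpow_sub ht0]
    field_simp
  have hst : (1 / (x * t ^ γ)) * t ^ ε = 1 / (x * t ^ ((γ + 1) / 2)) := by
    have : ((γ + 1) / 2 : ℝ) = γ - ε := by rw [hεdef]; ring
    rw [this, Real.rpow_sub ht0]
    field_simp
  rw [hσeq, ← hst, ← hwσ]
  calc w * Cfun σ ≤ w * (2 * σ * Real.log (σ + 1) + 4) :=
        mul_le_mul_of_nonneg_left (Cfun_le σ hσ0.le) hw.le
  _ ≤ w * (2 * σ * (1 + (ω / ε) * t ^ ε) + 4) := by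
      have := mul_le_mul_of_nonneg_left hlogσ (by positivity : (0:ℝ) ≤ 2 * σ)
      nlinarith [hw.le]
  _ = 2 * (w * σ) + (2 * ω / ε) * (w * σ * t ^ ε) + 4 * w := by
      field_simp

lemma Cfun_ge (s : ℝ) (hs : 2 ≤ s) : 2 * s * Real.log s - 5 * s ≤ Cfun s := by
  have hs0 : 0 < s := by linarith
  have h1 : Real.log s - 1 ≤ Real.arsinh (s / 2) := by
    have harsinh : Real.log (s / 2) ≤ Real.arsinh (s / 2) := by
      rw [Real.arsinh]
      apply Real.log_le_log (by positivity)
      have := Real.sqrt_nonneg (1 + (s / 2) ^ 2)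
      linarith
    have hl2 : Real.log (s / 2) = Real.log s - Real.log 2 :=
      Real.log_div (ne_of_gt hs0) two_ne_zero
    have hlog2 : Real.log 2 ≤ 1 := by
      linarith [Real.log_le_sub_one_of_pos (two_pos : (0:ℝ) < 2)]
    linarith
  have h2 : Real.sqrt (s ^ 2 + 4) ≤ 3 / 2 * s := by
    rw [show (3:ℝ) / 2 * s = Real.sqrt ((3 / 2 * s) ^ 2) by rw [Real.sqrt_sq (by linarith)]]
    apply Real.sqrt_le_sqrt
    nlinarith
  have h3 : 2 * s * (Real.log s - 1) ≤ 2 * s * Real.arsinh (s / 2) :=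
    mul_le_mul_of_nonneg_left h1 (by linarith)
  rw [Cfun]
  nlinarith

lemma ptwise3 (γ : ℝ) (hγ1 : 1 < γ) (hγ2 : γ < 2) (x : ℝ)
    (hx : x ∈ Set.Ioo (0:ℝ) (Real.exp (-64))) :
    1 / (2 * (x * Real.log (1 / x))) ≤ Cfun (1 / (x * Real.log (1 / x) ^ γ)) := by
  obtain ⟨hx0, hx1⟩ := hx
  set t := Real.log (1 / x) with htdef
  have ht64 : 64 < t := by
    have : Real.log (Real.exp 64) < t := by
      apply Real.log_lt_log (Real.exp_pos _)
      rw [lt_div_iff₀ hx0]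
      have h := mul_lt_mul_of_pos_left hx1 (Real.exp_pos 64)
      rwa [← Real.exp_add, add_neg_cancel, Real.exp_zero] at h
    rwa [Real.log_exp] at this
  have ht0 : (0:ℝ) < t := by linarith
  have ht1 : (1:ℝ) ≤ t := by linarith
  have htpγ : 0 < t ^ γ := Real.rpow_pos_of_pos ht0 γ
  set s := 1 / (x * t ^ γ) with hsdef
  have hs0 : 0 < s := by positivity
  have hlogx : Real.log x = -t := by rw [htdef, one_div, Real.log_inv, neg_neg]
  have hlogs : Real.log s = t - γ * Real.log t := by
    rw [hsdef, one_div, Real.log_inv, Real.log_mul (ne_of_gt hx0) (ne_of_gt htpγ),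
      Real.log_rpow ht0, hlogx]
    ring
  have hsqrt8 : (8:ℝ) ≤ Real.sqrt t := by
    rw [show (8:ℝ) = Real.sqrt 64 by rw [show (64:ℝ) = 8 ^ 2 by norm_num, Real.sqrt_sq]; norm_num]
    exact Real.sqrt_le_sqrt (by linarith)
  have hsqrt_le : Real.sqrt t ≤ t / 8 := by
    have hmul : Real.sqrt t * Real.sqrt t = t := Real.mul_self_sqrt ht0.le
    nlinarith
  have hlogt : Real.log t ≤ t / 4 := by
    have h1 : Real.log (Real.sqrt t) = Real.log t / 2 := Real.log_sqrt ht0.le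
    have h2 : Real.log (Real.sqrt t) ≤ Real.sqrt t - 1 :=
      Real.log_le_sub_one_of_pos (by positivity)
    linarith
  have hlogt0 : 0 ≤ Real.log t := Real.log_nonneg ht1
  have hlogs_ge : t / 2 ≤ Real.log s := by
    rw [hlogs]
    nlinarith
  have hs2 : 2 ≤ s := by
    have h1 : Real.exp (t / 2) ≤ Real.exp (Real.log s) :=
      Real.exp_le_exp.2 hlogs_ge
    rw [Real.exp_log hs0] at h1
    have h2 : t / 2 + 1 ≤ Real.exp (t / 2) := Real.add_one_le_exp _
    linarith
  have hC : s * (t / 2) ≤ Cfun s := by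
    have h1 := Cfun_ge s hs2
    nlinarith
  refine le_trans ?_ hC
  have htγ : t ^ γ ≤ t * t := by
    calc t ^ γ ≤ t ^ (2:ℝ) := Real.rpow_le_rpow_of_exponent_le ht1 (by linarith)
    _ = t * t := by rw [show (2:ℝ) = ((2:ℕ):ℝ) by norm_num, Real.rpow_natCast]; ring
  rw [div_le_iff₀ (by positivity : (0:ℝ) < 2 * (x * t)), hsdef, one_div]
  have heq : (x * t ^ γ)⁻¹ * (t / 2) * (2 * (x * t)) = x * (t * t) / (x * t ^ γ) := by
    field_simp
  rw [heq, le_div_iff₀ (by positivity), one_mul]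
  nlinarith

lemma div3 : ¬ IntegrableOn (fun x => 1 / (2 * (x * Real.log (1 / x))))
    (Set.Ioo (0:ℝ) (Real.exp (-64))) := by
  intro h
  rw [key_subst] at h
  have h2 : IntegrableOn (fun u : ℝ => 2⁻¹ * u ^ (-1:ℝ)) (Set.Ioi (64:ℝ)) := by
    refine h.congr_fun (fun u hu => ?_) measurableSet_Ioi
    have hu0 : (0:ℝ) < u := lt_trans (by norm_num) hu
    have h1 : Real.log (1 / Real.exp (-u)) = u := by
      rw [one_div, Real.exp_neg, inv_inv, Real.log_exp]
    simp only [h1]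
    rw [Real.rpow_neg hu0.le, Real.rpow_one]
    have he : Real.exp (-u) ≠ 0 := ne_of_gt (Real.exp_pos _)
    field_simp
  have h3 : IntegrableOn (fun u : ℝ => u ^ (-1:ℝ)) (Set.Ioi (64:ℝ)) := by
    have h4 : IntegrableOn (fun u : ℝ => 2 * (2⁻¹ * u ^ (-1:ℝ))) (Set.Ioi (64:ℝ)) :=
      h2.const_mul (2:ℝ)
    refine h4.congr_fun (fun u _ => ?_) measurableSet_Ioi
    ring
  rw [integrableOn_Ioi_rpow_iff (by norm_num : (0:ℝ) < 64)] at h3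
  linarith

theorem counterexample_magical_estimate_q_one (γ ω : ℝ) (hγ1 : 1 < γ) (hγ2 : γ < 2)
    (hω : 2 < ω) :
    (∫⁻ x in Set.Ioo (0 : ℝ) (1 / 2),
        ENNReal.ofReal (lamB (1 / (x * Real.log (1 / x) ^ ω))) < ⊤) ∧
    (∫⁻ x in Set.Ioo (0 : ℝ) (1 / 2),
        ENNReal.ofReal ((1 / (x * Real.log (1 / x) ^ ω)) *
          Cfun ((1 / (x * Real.log (1 / x) ^ γ)) / (1 / (x * Real.log (1 / x) ^ ω)))) < ⊤) ∧
    (∫⁻ x in Set.Ioo (0 : ℝ) (1 / 2),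
        ENNReal.ofReal (Cfun (1 / (x * Real.log (1 / x) ^ γ))) = ⊤) := by
  refine ⟨?_, ?_, ?_⟩
  · -- part (i)
    have hg : IntegrableOn
        (fun x => (1 + 3 * ω) * (1 / (x * Real.log (1 / x) ^ (ω - 1))) + 1)
        (Set.Ioo (0:ℝ) (1/2)) :=
      ((lemA' (ω - 1) (by linarith)).const_mul _).add
        (integrableOn_const measure_Ioo_lt_top.ne)
    calc ∫⁻ x in Set.Ioo (0 : ℝ) (1 / 2),
          ENNReal.ofReal (lamB (1 / (x * Real.log (1 / x) ^ ω)))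
        ≤ ∫⁻ x in Set.Ioo (0 : ℝ) (1 / 2),
          ENNReal.ofReal ((1 + 3 * ω) * (1 / (x * Real.log (1 / x) ^ (ω - 1))) + 1) := by
          refine lintegral_mono_ae ((ae_restrict_iff' measurableSet_Ioo).2
            (Filter.Eventually.of_forall fun x hx => ?_))
          exact ENNReal.ofReal_le_ofReal (ptwise1 ω hω x hx)
      _ < ⊤ := hg.setLIntegral_lt_top
  · -- part (ii)
    have hg : IntegrableOn
        (fun x => 2 * (1 / (x * Real.log (1 / x) ^ γ)) +
          (2 * ω / ((γ - 1) / 2)) * (1 / (x * Real.log (1 / x) ^ ((γ + 1) / 2))) +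
          4 * (1 / (x * Real.log (1 / x) ^ ω)))
        (Set.Ioo (0:ℝ) (1/2)) :=
      (((lemA' γ hγ1).const_mul 2).add
        ((lemA' ((γ + 1) / 2) (by linarith)).const_mul _)).add
        ((lemA' ω (by linarith)).const_mul 4)
    calc ∫⁻ x in Set.Ioo (0 : ℝ) (1 / 2),
          ENNReal.ofReal ((1 / (x * Real.log (1 / x) ^ ω)) *
            Cfun ((1 / (x * Real.log (1 / x) ^ γ)) / (1 / (x * Real.log (1 / x) ^ ω))))
        ≤ ∫⁻ x in Set.Ioo (0 : ℝ) (1 / 2),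
          ENNReal.ofReal (2 * (1 / (x * Real.log (1 / x) ^ γ)) +
            (2 * ω / ((γ - 1) / 2)) * (1 / (x * Real.log (1 / x) ^ ((γ + 1) / 2))) +
            4 * (1 / (x * Real.log (1 / x) ^ ω))) := by
          refine lintegral_mono_ae ((ae_restrict_iff' measurableSet_Ioo).2
            (Filter.Eventually.of_forall fun x hx => ?_))
          exact ENNReal.ofReal_le_ofReal (ptwise2 γ ω hγ1 hγ2 hω x hx)
      _ < ⊤ := hg.setLIntegral_lt_top
  · -- part (iii)
    by_contra h
    have hlt : ∫⁻ x in Set.Ioo (0 : ℝ) (1 / 2),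
        ENNReal.ofReal (Cfun (1 / (x * Real.log (1 / x) ^ γ))) < ⊤ := Ne.lt_top h
    have hsub : Set.Ioo (0:ℝ) (Real.exp (-64)) ⊆ Set.Ioo (0:ℝ) (1/2) := by
      apply Set.Ioo_subset_Ioo le_rfl
      have h1 : Real.exp (-(64:ℝ)) < Real.exp (-Real.log 2) := by
        apply Real.exp_lt_exp.2
        have : Real.log 2 ≤ 1 := by
          linarith [Real.log_le_sub_one_of_pos (two_pos : (0:ℝ) < 2)]
        linarith
      have h2 : Real.exp (-Real.log 2) = 1 / 2 := by
        rw [Real.exp_neg, Real.exp_log two_pos, one_div]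
      linarith
    set F : ℝ → ℝ := fun x => 1 / (2 * (x * Real.log (1 / x))) with hFdef
    have hxlt1 : ∀ x ∈ Set.Ioo (0:ℝ) (Real.exp (-64)), 0 < Real.log (1 / x) := by
      intro x hx
      apply Real.log_pos
      rw [lt_div_iff₀ hx.1, one_mul]
      calc x < Real.exp (-64) := hx.2
      _ < 1 := Real.exp_lt_one_iff.2 (by norm_num)
    have hF : ∫⁻ x in Set.Ioo (0:ℝ) (Real.exp (-64)), ENNReal.ofReal (F x) < ⊤ :=
      calc ∫⁻ x in Set.Ioo (0:ℝ) (Real.exp (-64)), ENNReal.ofReal (F x)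
          ≤ ∫⁻ x in Set.Ioo (0:ℝ) (Real.exp (-64)),
            ENNReal.ofReal (Cfun (1 / (x * Real.log (1 / x) ^ γ))) := by
            refine lintegral_mono_ae ((ae_restrict_iff' measurableSet_Ioo).2
              (Filter.Eventually.of_forall fun x hx => ?_))
            exact ENNReal.ofReal_le_ofReal (ptwise3 γ hγ1 hγ2 x hx)
        _ ≤ ∫⁻ x in Set.Ioo (0 : ℝ) (1 / 2),
            ENNReal.ofReal (Cfun (1 / (x * Real.log (1 / x) ^ γ))) :=
            lintegral_mono_set hsub
        _ < ⊤ := hlt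
    have hcont : ContinuousOn F (Set.Ioo (0:ℝ) (Real.exp (-64))) := by
      apply ContinuousOn.div continuousOn_const
      · apply continuousOn_const.mul
        apply continuousOn_id.mul
        apply Real.continuousOn_log.comp
          (continuousOn_const.div continuousOn_id fun x hx => ne_of_gt hx.1)
        intro x hx
        have h2 := hx.1
        simp only [Set.mem_compl_iff, Set.mem_singleton_iff, Pi.div_apply, id_eq]
        exact ne_of_gt (by positivity)
      · intro x hx
        have h1 := hxlt1 x hx
        have h2 := hx.1
        positivity
    have hmeas : AEStronglyMeasurable F
        (volume.restrict (Set.Ioo (0:ℝ) (Real.exp (-64)))) :=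
      hcont.aestronglyMeasurable measurableSet_Ioo
    have h0 : 0 ≤ᵐ[volume.restrict (Set.Ioo (0:ℝ) (Real.exp (-64)))] F := by
      refine (ae_restrict_iff' measurableSet_Ioo).2
        (Filter.Eventually.of_forall fun x hx => ?_)
      have h1 := hxlt1 x hx
      have h2 := hx.1
      positivity
    have hint : IntegrableOn F (Set.Ioo (0:ℝ) (Real.exp (-64))) :=
      ⟨hmeas, (hasFiniteIntegral_iff_ofReal h0).2 hF⟩
    exact div3 hint
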